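/- (Corollary 2) Let ℓ_l and ℓ_r be positive integers with ℓ_l = ℓ_r or ℓ_l = ℓ_r + 1. Let C_l ⊆ F₂^{ℓ_l} be a finite set of nonzero vectors, let d_min be the minimum Hamming weight among vectors of C_l, and let B = |{u ∈ C_l : w_H(u) = d_min}|. Take the right child code to be all of F₂^{ℓ_r}. Consider the average parent weight enumerating polynomial P(Y) = (1/ℓ_l!) · Σ_{π} Σ_{u ∈ C_l} Σ_{v ∈ F₂^{ℓ_r}} Y^{w_H(u + π·pad(v)) + w_H(v)} ∈ ℚ[Y], where π ranges over all permutations of {0,…,ℓ_l−1}. Then the smallest exponent of Y appearing in P(Y) with nonzero coefficient is d_min, and the coefficient of Y^{d_min} in P(Y) equals B · Σ_{d_r = 0}^{min(d_min, ℓ_r)} C(ℓ_r, d_r)·C(d_min, d_r) / C(ℓ_l, d_r). -/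

import Mathlib

/-- `pad l r v` extends `v ∈ 𝔽₂^r` to a vector in `𝔽₂^l` by appending zero coordinates.
When `l = r` it is `v` itself; when `l = r + 1` it is `v` extended by one zero. -/
def pad (l r : ℕ) (v : Fin r → ZMod 2) : Fin l → ZMod 2 :=
  fun i => if h : (i : ℕ) < r then v ⟨i, h⟩ else 0

namespace MWEFAux
open Finset

lemma hn_eq {n : ℕ} (x : Fin n → ZMod 2) :
    hammingNorm x = (univ.filter fun i => x i ≠ 0).card := rfl

lemma key_identity {n : ℕ} (u x : Fin n → ZMod 2) :
    hammingNorm (u + x) + hammingNorm x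
      = hammingNorm u + 2 * (univ.filter fun i => u i = 0 ∧ x i ≠ 0).card := by
  simp only [hammingNorm, Finset.card_filter, ← Finset.sum_add_distrib, Finset.mul_sum]
  refine Finset.sum_congr rfl fun i _ => ?_
  have h2 : ∀ a : ZMod 2, a = 0 ∨ a = 1 := by decide
  rcases h2 (u i) with h|h <;> rcases h2 (x i) with h'|h' <;>
    simp [Pi.add_apply, h, h', show (1:ZMod 2)+1 = 0 from by decide,
      show (1:ZMod 2) ≠ 0 from by decide]

lemma hn_perm {n : ℕ} (π : Equiv.Perm (Fin n)) (y : Fin n → ZMod 2) :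
    hammingNorm (fun i => y (π⁻¹ i)) = hammingNorm y := by
  simp only [hammingNorm]
  apply Finset.card_bij (fun i _ => π⁻¹ i)
  · intro i hi; simp only [mem_filter, mem_univ, true_and] at hi ⊢; exact hi
  · intro a _ b _ h; exact (Equiv.injective π⁻¹ h)
  · intro j hj; refine ⟨π j, ?_, by simp⟩
    simp only [mem_filter, mem_univ, true_and] at hj ⊢; simpa using hj

lemma hn_pad {l r : ℕ} (h : r ≤ l) (v : Fin r → ZMod 2) :
    hammingNorm (pad l r v) = hammingNorm v := by
  simp only [hammingNorm]
  apply Finset.card_bij (fun (j : Fin l) hj =>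
    (⟨(j : ℕ), by
      by_contra hc
      simp only [mem_filter, mem_univ, true_and] at hj
      exact hj (by simp [pad, dif_neg hc])⟩ : Fin r))
  · intro j hj
    simp only [mem_filter, mem_univ, true_and] at hj ⊢
    have hlt : (j:ℕ) < r := by
      by_contra hc; exact hj (by simp [pad, dif_neg hc])
    simpa [pad, dif_pos hlt] using hj
  · intro a ha b hb hab
    apply Fin.ext
    exact congrArg (Fin.val (n := r)) hab
  · intro j hj
    simp only [mem_filter, mem_univ, true_and] at hj
    refine ⟨⟨(j : ℕ), lt_of_lt_of_le j.2 h⟩, ?_, by apply Fin.ext; rfl⟩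
    simp only [mem_filter, mem_univ, true_and]; simp only [pad]
    rw [dif_pos j.2]
    convert hj using 2 <;> apply Fin.ext <;> rfl

lemma card_weight (r d : ℕ) :
    (univ.filter fun v : Fin r → ZMod 2 => hammingNorm v = d).card = r.choose d := by
  have hpc := Finset.card_powersetCard d (univ : Finset (Fin r))
  rw [Finset.card_univ, Fintype.card_fin] at hpc
  rw [← hpc]
  apply Finset.card_bij (fun v _ => univ.filter fun i => v i ≠ 0)
  · intro v hv
    simp only [mem_filter, mem_univ, true_and] at hv
    rw [Finset.mem_powersetCard]
    exact ⟨Finset.subset_univ _, hv⟩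
  · intro a ha b hb hab
    funext i
    have hiff : (i ∈ univ.filter fun j => a j ≠ 0) ↔ (i ∈ univ.filter fun j => b j ≠ 0) := by
      rw [hab]
    simp only [mem_filter, mem_univ, true_and] at hiff
    have h2 : ∀ c : ZMod 2, c = 0 ∨ c = 1 := by decide
    rcases h2 (a i) with h|h <;> rcases h2 (b i) with h'|h' <;> rw [h, h'] <;>
        rw [h, h'] at hiff
    all_goals first
      | rfl
      | exact (hiff.mpr one_ne_zero rfl).elim
      | exact (hiff.mp one_ne_zero rfl).elim
  · intro s hs
    rw [Finset.mem_powersetCard] at hs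
    refine ⟨fun i => if i ∈ s then 1 else 0, ?_, ?_⟩
    · simp only [mem_filter, mem_univ, true_and, hammingNorm]
      rw [← hs.2]
      congr 1
      ext i
      simp only [mem_filter, mem_univ, true_and]
      by_cases h : i ∈ s <;> simp [h]
    · ext i
      simp only [mem_filter, mem_univ, true_and]
      by_cases h : i ∈ s <;> simp [h]

lemma sum_by_weight (r : ℕ) (f : ℕ → ℚ) :
    ∑ v : Fin r → ZMod 2, f (hammingNorm v)
      = ∑ dr ∈ Finset.range (r + 1), (r.choose dr : ℚ) * f dr := by
  classical
  rw [← Finset.sum_fiberwise_of_maps_to (g := fun v : Fin r → ZMod 2 => hammingNorm v)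
      (t := Finset.range (r + 1)) (fun v _ => Finset.mem_range.mpr (Nat.lt_succ_of_le ?_))]
  · refine Finset.sum_congr rfl fun dr _ => ?_
    rw [Finset.sum_congr rfl (fun v hv => by
        rw [(Finset.mem_filter.mp hv).2]), Finset.sum_const, nsmul_eq_mul, card_weight]
  · exact hammingNorm_le_card_fintype.trans (by simp)

lemma card_perm_fixed (n : ℕ) (T : Finset (Fin n)) (f : ↥T ↪ Fin n) :
    Fintype.card {π : Equiv.Perm (Fin n) // ∀ a : ↥T, π a = f a}
      = (n - T.card).factorial := by
  classical
  have hg : Function.Injective (fun x : ↥(↑T : Set (Fin n)) => f ⟨x.1, x.2⟩) := by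
    intro a b hab
    have := f.injective hab
    exact Subtype.ext (congrArg Subtype.val this)
  set g : ↥(↑T : Set (Fin n)) → Fin n := fun x => f ⟨x.1, x.2⟩ with hgdef
  let e₀ : ↥(↑T : Set (Fin n)) ≃ ↥(Set.range g) := Equiv.ofInjective g hg
  have hcompl := Equiv.Set.compl (α := Fin n) (β := Fin n) e₀
  have hcard1 : Fintype.card ↥((↑T : Set (Fin n))ᶜ) = n - T.card := by
    rw [Fintype.card_compl_set]
    simp
  have hcard2 : Fintype.card ↥((Set.range g)ᶜ) = n - T.card := by
    rw [Fintype.card_compl_set]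
    rw [Set.card_range_of_injective hg]
    simp
  have hc : Fintype.card {e : Fin n ≃ Fin n // ∀ x : ↥(↑T : Set (Fin n)), e x = ↑(e₀ x)}
      = (n - T.card).factorial := by
    rw [Fintype.card_congr hcompl]
    rw [Fintype.card_equiv (Fintype.equivOfCardEq (hcard1.trans hcard2.symm))]
    rw [hcard1]
  rw [← hc]
  apply Fintype.card_congr
  apply Equiv.subtypeEquivRight
  intro π
  constructor
  · intro h x
    rw [h ⟨x.1, x.2⟩]
    simp [e₀, Equiv.ofInjective_apply, g]
  · intro h a
    have := h ⟨a.1, a.2⟩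
    rw [this]
    simp [e₀, Equiv.ofInjective_apply, g]

lemma count_perm (n : ℕ) (S T : Finset (Fin n)) :
    Fintype.card {π : Equiv.Perm (Fin n) // ∀ t ∈ T, π t ∈ S}
      = S.card.descFactorial T.card * (n - T.card).factorial := by
  classical
  by_cases hTS : T.card ≤ S.card
  swap
  · push_neg at hTS
    rw [Nat.descFactorial_eq_zero_iff_lt.mpr hTS, Nat.zero_mul]
    rw [Fintype.card_eq_zero_iff]
    refine ⟨fun ⟨π, h⟩ => ?_⟩
    have himg : T.image π ⊆ S := fun x hx => by
      obtain ⟨t, ht, rfl⟩ := Finset.mem_image.mp hx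
      exact h t ht
    have := Finset.card_le_card himg
    rw [Finset.card_image_of_injective _ π.injective] at this
    omega
  · haveI : Nonempty (↥T ↪ ↥S) :=
      Function.Embedding.nonempty_of_card_le (by simpa [Fintype.card_coe] using hTS)
    rw [Fintype.card_subtype]
    set F : Equiv.Perm (Fin n) → (↥T ↪ ↥S) := fun π =>
      if h : ∀ t ∈ T, π t ∈ S then
        ⟨fun a => ⟨π a, h a a.2⟩,
          fun a b hab => Subtype.ext (π.injective (congrArg Subtype.val hab))⟩
      else Classical.arbitrary _ with hF
    rw [Finset.card_eq_sum_card_fiberwise (f := F) (t := Finset.univ)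
      (fun x _ => Finset.mem_univ _)]
    have hfib : ∀ f : ↥T ↪ ↥S,
        ((univ.filter fun π : Equiv.Perm (Fin n) => ∀ t ∈ T, π t ∈ S).filter
            fun π => F π = f).card = (n - T.card).factorial := by
      intro f
      have heq : ((univ.filter fun π : Equiv.Perm (Fin n) => ∀ t ∈ T, π t ∈ S).filter
            fun π => F π = f)
          = univ.filter (fun π : Equiv.Perm (Fin n) =>
              ∀ a : ↥T, π a = ((f.trans (Function.Embedding.subtype _)) a)) := by
        ext π
        simp only [Finset.mem_filter, Finset.mem_univ, true_and]
        constructor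
        · rintro ⟨h1, h2⟩ a
          rw [hF] at h2
          simp only [dif_pos h1] at h2
          have h3 := congrArg (fun (e : ↥T ↪ ↥S) => ((e a : ↥S) : Fin n)) h2
          exact h3
        · intro h
          have h1 : ∀ t ∈ T, π t ∈ S := fun t ht => by
            rw [h ⟨t, ht⟩]; exact (f ⟨t, ht⟩).2
          refine ⟨h1, ?_⟩
          rw [hF]
          simp only [dif_pos h1]
          apply DFunLike.ext
          intro a
          exact Subtype.ext (h a)
      rw [heq, ← Fintype.card_subtype,
        card_perm_fixed n T (f.trans (Function.Embedding.subtype _))]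
    rw [Finset.sum_congr rfl (fun f _ => hfib f), Finset.sum_const, Finset.card_univ,
      Fintype.card_embedding_eq, Fintype.card_coe, Fintype.card_coe, smul_eq_mul]

end MWEFAux

open Polynomial in
/-- **Corollary 2.** Let `C_l ⊆ 𝔽₂^{ℓ_l}` be a set of nonzero vectors with
minimum weight `d_min` attained `B` times, and take the right child code to be the whole
space `𝔽₂^{ℓ_r}`. Then the smallest exponent appearing with nonzero coefficient in the
average parent weight enumerating polynomial `P` is `d_min`, with coefficient
`B · Σ_{d_r=0}^{min(d_min, ℓ_r)} C(ℓ_r,d_r) C(d_min,d_r) / C(ℓ_l,d_r)`. -/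
theorem average_MWEF_full_right_child (ll lr : ℕ) (hll : 0 < ll) (hlr : 0 < lr)
    (hcase : ll = lr ∨ ll = lr + 1)
    (Cl : Finset (Fin ll → ZMod 2)) (hne : Cl.Nonempty)
    (hnz : ∀ u ∈ Cl, u ≠ 0)
    (dmin : ℕ) (hmem : ∃ u ∈ Cl, hammingNorm u = dmin)
    (hmin : ∀ u ∈ Cl, dmin ≤ hammingNorm u)
    (B : ℕ) (hB : B = (Cl.filter fun u => hammingNorm u = dmin).card)
    (P : ℚ[X])
    (hP : P = (1 / (ll.factorial : ℚ)) •
        ∑ π : Equiv.Perm (Fin ll), ∑ u ∈ Cl, ∑ v : Fin lr → ZMod 2,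
          (X : ℚ[X]) ^
            (hammingNorm (u + fun i => pad ll lr v (π⁻¹ i)) + hammingNorm v)) :
    (∀ e, e < dmin → P.coeff e = 0) ∧
      P.coeff dmin ≠ 0 ∧
      P.coeff dmin =
        (B : ℚ) * ∑ dr ∈ Finset.range (min dmin lr + 1),
          ((lr.choose dr : ℚ) * (dmin.choose dr : ℚ)) / (ll.choose dr : ℚ) := by
  open MWEFAux Finset in
  have hrll : lr ≤ ll := by rcases hcase with h|h <;> omega
  -- coefficient formula
  have hcoeff : ∀ e : ℕ, P.coeff e = (1 / (ll.factorial : ℚ)) *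
      ∑ π : Equiv.Perm (Fin ll), ∑ u ∈ Cl, ∑ v : Fin lr → ZMod 2,
        (if e = hammingNorm (u + fun i => pad ll lr v (π⁻¹ i)) + hammingNorm v
          then (1:ℚ) else 0) := by
    intro e
    rw [hP, Polynomial.coeff_smul, smul_eq_mul]
    congr 1
    rw [Polynomial.finset_sum_coeff]
    refine Finset.sum_congr rfl fun π _ => ?_
    rw [Polynomial.finset_sum_coeff]
    refine Finset.sum_congr rfl fun u _ => ?_
    rw [Polynomial.finset_sum_coeff]
    exact Finset.sum_congr rfl fun v _ => Polynomial.coeff_X_pow _ _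
  -- weight of the permuted padded vector
  have hwx : ∀ (π : Equiv.Perm (Fin ll)) (v : Fin lr → ZMod 2),
      hammingNorm (fun i => pad ll lr v (π⁻¹ i)) = hammingNorm v := by
    intro π v
    rw [hn_perm π (pad ll lr v), hn_pad hrll]
  -- lower bound on exponents
  have hlow : ∀ (π : Equiv.Perm (Fin ll)) (u : Fin ll → ZMod 2) (v : Fin lr → ZMod 2),
      hammingNorm u ≤ hammingNorm (u + fun i => pad ll lr v (π⁻¹ i)) + hammingNorm v := by
    intro π u v
    rw [← hwx π v, key_identity u (fun i => pad ll lr v (π⁻¹ i))]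
    omega
  constructor
  · intro e he
    rw [hcoeff e]
    rw [Finset.sum_congr rfl fun π _ => Finset.sum_congr rfl fun u hu =>
      Finset.sum_congr rfl fun v _ => if_neg (by
        intro hcontra
        have h1 := hlow π u v
        have h2 := hmin u hu
        omega)]
    simp
  -- the main computation of the coefficient at dmin
  have hmain : P.coeff dmin = (1 / (ll.factorial : ℚ)) * ((B : ℚ) *
      ∑ dr ∈ Finset.range (lr + 1), (lr.choose dr : ℚ) *
        ((dmin.descFactorial dr : ℚ) * ((ll - dr).factorial : ℚ))) := by
    rw [hcoeff dmin]
    congr 1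
    rw [Finset.sum_comm]
    have hstep : ∀ u ∈ Cl,
        (∑ π : Equiv.Perm (Fin ll), ∑ v : Fin lr → ZMod 2,
          (if dmin = hammingNorm (u + fun i => pad ll lr v (π⁻¹ i)) + hammingNorm v
            then (1:ℚ) else 0))
        = if hammingNorm u = dmin then
            ∑ v : Fin lr → ZMod 2,
              ((dmin.descFactorial (hammingNorm v) : ℚ) *
                ((ll - hammingNorm v).factorial : ℚ))
          else 0 := by
      intro u hu
      rw [Finset.sum_comm]
      by_cases hud : hammingNorm u = dmin
      · rw [if_pos hud]
        refine Finset.sum_congr rfl fun v _ => ?_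
        -- condition rewriting
        have hcond : ∀ π : Equiv.Perm (Fin ll),
            (dmin = hammingNorm (u + fun i => pad ll lr v (π⁻¹ i)) + hammingNorm v)
            ↔ (∀ t ∈ (univ.filter fun j => pad ll lr v j ≠ 0),
                  π t ∈ (univ.filter fun i => u i ≠ 0)) := by
          intro π
          have hid := key_identity u (fun i => pad ll lr v (π⁻¹ i))
          have hm1 : ∀ m w : ℕ, dmin = w + 2 * m → w = dmin → m = 0 := by omega
          have hm2 : ∀ m w : ℕ, m = 0 → w = dmin → dmin = w + 2 * m := by omega
          constructor
          · intro h
            rw [← hwx π v, hid] at h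
            have hF0 := hm1 _ _ h hud
            rw [Finset.card_eq_zero, Finset.eq_empty_iff_forall_notMem] at hF0
            intro t ht
            simp only [mem_filter, mem_univ, true_and] at ht ⊢
            have h2 := hF0 (π t)
            simp only [mem_filter, mem_univ, true_and, not_and, not_not] at h2
            intro hut
            have h3 := h2 hut
            rw [← Equiv.Perm.mul_apply, inv_mul_cancel, Equiv.Perm.one_apply] at h3
            exact ht h3
          · intro h
            rw [← hwx π v, hid]
            refine hm2 _ _ ?_ hud
            rw [Finset.card_eq_zero, Finset.eq_empty_iff_forall_notMem]
            intro i hi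
            simp only [mem_filter, mem_univ, true_and] at hi
            have h3 := h (π⁻¹ i) (by
              simp only [mem_filter, mem_univ, true_and]
              exact hi.2)
            simp only [mem_filter, mem_univ, true_and,
              ← Equiv.Perm.mul_apply, mul_inv_cancel, Equiv.Perm.one_apply] at h3
            exact h3 hi.1
        rw [Finset.sum_congr rfl fun π _ => if_congr (hcond π) rfl rfl]
        rw [Finset.sum_boole]
        have hcount := count_perm ll (univ.filter fun i => u i ≠ 0)
          (univ.filter fun j => pad ll lr v j ≠ 0)
        rw [Fintype.card_subtype] at hcount
        have hSu : (univ.filter fun i => u i ≠ 0).card = dmin := by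
          rw [← hn_eq]; exact hud
        have hTv : (univ.filter fun j => pad ll lr v j ≠ 0).card = hammingNorm v := by
          rw [← hn_eq]; exact hn_pad hrll v
        rw [hcount, hSu, hTv]
        push_cast
        ring
      · rw [if_neg hud]
        refine Finset.sum_eq_zero fun v _ => Finset.sum_eq_zero fun π _ => if_neg ?_
        intro h
        have h1 := hlow π u v
        have h2 := hmin u hu
        have h3 := key_identity u (fun i => pad ll lr v (π⁻¹ i))
        rw [hwx π v] at h3
        omega
    rw [Finset.sum_congr rfl hstep, ← Finset.sum_filter, Finset.sum_const, hB,
      nsmul_eq_mul]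
    congr 1
    exact sum_by_weight lr fun d => (dmin.descFactorial d : ℚ) * ((ll - d).factorial : ℚ)
  -- convert to the stated closed form
  have hfinal : P.coeff dmin =
      (B : ℚ) * ∑ dr ∈ Finset.range (min dmin lr + 1),
        ((lr.choose dr : ℚ) * (dmin.choose dr : ℚ)) / (ll.choose dr : ℚ) := by
    rw [hmain]
    have hterm : ∀ dr ∈ Finset.range (lr + 1),
        (1 / (ll.factorial : ℚ)) * ((lr.choose dr : ℚ) *
          ((dmin.descFactorial dr : ℚ) * ((ll - dr).factorial : ℚ)))
        = ((lr.choose dr : ℚ) * (dmin.choose dr : ℚ)) / (ll.choose dr : ℚ) := by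
      intro dr hdr
      rw [Finset.mem_range] at hdr
      have hdrll : dr ≤ ll := le_trans (Nat.lt_succ_iff.mp hdr) hrll
      have hfac : (ll.choose dr : ℚ) * (dr.factorial : ℚ) * ((ll - dr).factorial : ℚ)
          = (ll.factorial : ℚ) := by
        exact_mod_cast Nat.choose_mul_factorial_mul_factorial hdrll
      have hdesc : (dmin.descFactorial dr : ℚ)
          = (dr.factorial : ℚ) * (dmin.choose dr : ℚ) := by
        exact_mod_cast Nat.descFactorial_eq_factorial_mul_choose dmin dr
      have hll0 : (ll.factorial : ℚ) ≠ 0 := by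
        exact_mod_cast Nat.factorial_ne_zero ll
      have hch0 : (ll.choose dr : ℚ) ≠ 0 :=
        ne_of_gt (by exact_mod_cast Nat.choose_pos hdrll)
      rw [hdesc]
      field_simp
      linear_combination ((lr.choose dr : ℚ) * (dmin.choose dr : ℚ)) * hfac
    have h1 : (1 / (ll.factorial : ℚ)) * ((B : ℚ) *
        ∑ dr ∈ Finset.range (lr + 1), (lr.choose dr : ℚ) *
          ((dmin.descFactorial dr : ℚ) * ((ll - dr).factorial : ℚ)))
        = (B : ℚ) * ∑ dr ∈ Finset.range (lr + 1), (1 / (ll.factorial : ℚ)) *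
            ((lr.choose dr : ℚ) *
              ((dmin.descFactorial dr : ℚ) * ((ll - dr).factorial : ℚ))) := by
      rw [mul_left_comm, Finset.mul_sum]
    rw [h1, Finset.sum_congr rfl hterm]
    congr 1
    refine (Finset.sum_subset (Finset.range_subset_range.mpr (by omega)) ?_).symm
    intro dr hdr hdr2
    rw [Finset.mem_range] at hdr
    rw [Finset.mem_range] at hdr2
    have : dmin < dr := by omega
    rw [Nat.choose_eq_zero_of_lt this]
    simp
  refine ⟨?_, hfinal⟩
  · rw [hfinal]
    have hB1 : (1:ℚ) ≤ (B:ℚ) := by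
      have : 0 < B := by
        rw [hB, Finset.card_pos]
        obtain ⟨u, hu, hw⟩ := hmem
        exact ⟨u, Finset.mem_filter.mpr ⟨hu, hw⟩⟩
      exact_mod_cast this
    have hsum : (1:ℚ) ≤ ∑ dr ∈ Finset.range (min dmin lr + 1),
        ((lr.choose dr : ℚ) * (dmin.choose dr : ℚ)) / (ll.choose dr : ℚ) := by
      have h0 : ((lr.choose 0 : ℚ) * (dmin.choose 0 : ℚ)) / (ll.choose 0 : ℚ) = 1 := by
        simp
      calc (1:ℚ) = ((lr.choose 0 : ℚ) * (dmin.choose 0 : ℚ)) / (ll.choose 0 : ℚ) := h0.symm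
        _ ≤ _ := Finset.single_le_sum (f := fun dr =>
            ((lr.choose dr : ℚ) * (dmin.choose dr : ℚ)) / (ll.choose dr : ℚ))
            (fun i _ => by positivity) (Finset.mem_range.mpr (by omega))
    exact ne_of_gt (by nlinarith)
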